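/- Let k be a field. For all objects X, Y of 𝓠(k) and every morphism φ : L(X) → L(Y) in 𝓠(k)[W⁻¹], there exist a hyperbolic space H and a morphism f : X → Y ⊥ H of 𝓠(k) such that φ = (L(ι_Y))⁻¹ ∘ L(f), where ι_Y : Y → Y ⊥ H is the canonical inclusion (which belongs to W, so that L(ι_Y) is invertible). -/

import Mathlib

open CategoryTheory

noncomputable section

namespace StableHomology

/-- An object of the category `𝓠(k)`: a finite-dimensional `k`-vector space equipped
with a quadratic form. -/
structure QuadSpace (k : Type) [Field k] : Type 1 where
  /-- the underlying vector space -/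
  carrier : Type
  [isAddCommGroup : AddCommGroup carrier]
  [isModule : Module k carrier]
  [isFinite : FiniteDimensional k carrier]
  /-- the quadratic form -/
  form : QuadraticForm k carrier

attribute [instance] QuadSpace.isAddCommGroup QuadSpace.isModule QuadSpace.isFinite

instance {k : Type} [Field k] : CoeSort (QuadSpace k) Type :=
  ⟨QuadSpace.carrier⟩

variable (k : Type) [Field k]

/-- A morphism of `𝓠(k)`: an injective linear map compatible with the quadratic forms. -/
@[ext]
structure QuadHom (X Y : QuadSpace k) : Type where
  /-- the underlying linear map -/
  toLinearMap : X →ₗ[k] Y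
  injective : Function.Injective toLinearMap
  compat : ∀ x : X, Y.form (toLinearMap x) = X.form x

instance : Category (QuadSpace k) where
  Hom X Y := QuadHom k X Y
  id X := ⟨LinearMap.id, fun _ _ h => h, fun _ => rfl⟩
  comp {X Y Z} f g := ⟨g.toLinearMap.comp f.toLinearMap, g.injective.comp f.injective,
    fun x => by
      show Z.form (g.toLinearMap (f.toLinearMap x)) = X.form x
      rw [g.compat, f.compat]⟩
  id_comp f := by apply QuadHom.ext; rfl
  comp_id f := by apply QuadHom.ext; rfl
  assoc f g h := by apply QuadHom.ext; rfl

/-- The orthogonal sum of two quadratic spaces. -/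
def orthSum (X Y : QuadSpace k) : QuadSpace k where
  carrier := X × Y
  form := QuadraticMap.prod X.form Y.form

/-- The hyperbolic plane `(k², (x, y) ↦ x y)`. -/
def hypPlane : QuadSpace k where
  carrier := k × k
  form := LinearMap.BilinMap.toQuadraticMap
    (LinearMap.mk₂ k (fun v w : k × k => v.1 * w.2)
      (fun _ _ _ => by simp [add_mul])
      (fun _ _ _ => by simp [mul_assoc])
      (fun _ _ _ => by simp [mul_add])
      (fun _ _ _ => by dsimp; ring))

/-- The hyperbolic space which is the orthogonal sum of `m` copies of the hyperbolic
plane. -/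
def hypSpace : ℕ → QuadSpace k
  | 0 => { carrier := PUnit, form := 0 }
  | (m + 1) => orthSum k (hypSpace m) (hypPlane k)

/-- The canonical inclusion `D → D ⊥ H`, `x ↦ (x, 0)`. -/
def orthIncl (D H : QuadSpace k) : D ⟶ orthSum k D H where
  toLinearMap := LinearMap.inl k D H
  injective := LinearMap.inl_injective
  compat x := by
    show QuadraticMap.prod D.form H.form (x, 0) = D.form x
    simp [QuadraticMap.prod_apply]

/-- The auxiliary inductive predicate singling out the canonical inclusions
`D → D ⊥ H` with `H` a hyperbolic space. -/
inductive IsHypIncl : ∀ (X Y : QuadSpace k), (X ⟶ Y) → Prop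
  | mk (D : QuadSpace k) (m : ℕ) :
      IsHypIncl D (orthSum k D (hypSpace k m)) (orthIncl k D (hypSpace k m))

/-- The class `W` of morphisms of `𝓠(k)` of the form `ι_D : D → D ⊥ H` with `H` a
hyperbolic space. -/
def Wq : MorphismProperty (QuadSpace k) := fun X Y f => IsHypIncl k X Y f

@[simp]
lemma comp_toLinearMap {A B C : QuadSpace k} (f : A ⟶ B) (g : B ⟶ C) :
    (f ≫ g).toLinearMap = g.toLinearMap.comp f.toLinearMap := rfl

@[simp]
lemma id_toLinearMap (A : QuadSpace k) : (𝟙 A : A ⟶ A).toLinearMap = LinearMap.id := rfl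

/-- The morphism between orthogonal sums induced componentwise. -/
def sumMap {A B C D : QuadSpace k} (f : A ⟶ B) (g : C ⟶ D) :
    orthSum k A C ⟶ orthSum k B D where
  toLinearMap := f.toLinearMap.prodMap g.toLinearMap
  injective := fun a b h =>
    Prod.ext (f.injective (congrArg Prod.fst h)) (g.injective (congrArg Prod.snd h))
  compat x := by
    show QuadraticMap.prod B.form D.form (f.toLinearMap x.1, g.toLinearMap x.2) =
      QuadraticMap.prod A.form C.form x
    simp [QuadraticMap.prod_apply, f.compat, g.compat]
    rfl

/-- An isometric linear equivalence induces an isomorphism in `𝓠(k)`. -/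
def isoMk {A B : QuadSpace k} (e : A.carrier ≃ₗ[k] B.carrier)
    (he : ∀ x, B.form (e x) = A.form x) : A ≅ B where
  hom := ⟨e.toLinearMap, e.injective, he⟩
  inv := ⟨e.symm.toLinearMap, e.symm.injective, fun y => by
    have := he (e.symm y)
    rw [e.apply_symm_apply] at this
    exact this.symm⟩
  hom_inv_id := by
    apply QuadHom.ext
    apply LinearMap.ext
    intro x
    simp
  inv_hom_id := by
    apply QuadHom.ext
    apply LinearMap.ext
    intro x
    simp

/-- The linear equivalence `Hₙ × Hₘ ≃ Hₙ₊ₘ`. -/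
def hypAddEquiv (n : ℕ) : ∀ m : ℕ,
    ((hypSpace k n).carrier × (hypSpace k m).carrier) ≃ₗ[k] (hypSpace k (n + m)).carrier
  | 0 =>
    { toFun := Prod.fst
      invFun := fun x => (x, 0)
      left_inv := fun p => Prod.ext rfl (@Subsingleton.elim PUnit _ _ _)
      right_inv := fun _ => rfl
      map_add' := fun _ _ => rfl
      map_smul' := fun _ _ => rfl }
  | (m + 1) =>
    (LinearEquiv.prodAssoc k (hypSpace k n).carrier (hypSpace k m).carrier
      (k × k)).symm.trans ((hypAddEquiv n m).prodCongr (LinearEquiv.refl k (k × k)))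

lemma hypAddEquiv_form (n : ℕ) : ∀ (m : ℕ)
    (x : (hypSpace k n).carrier × (hypSpace k m).carrier),
    (hypSpace k (n + m)).form (hypAddEquiv k n m x) =
      (orthSum k (hypSpace k n) (hypSpace k m)).form x
  | 0, x => by
    show (hypSpace k n).form x.1 = QuadraticMap.prod (hypSpace k n).form 0 x
    simp [QuadraticMap.prod_apply]
  | (m + 1), x => by
    show QuadraticMap.prod (hypSpace k (n + m)).form (hypPlane k).form
        (hypAddEquiv k n m (x.1, x.2.1), x.2.2) =
      QuadraticMap.prod (hypSpace k n).form
        (QuadraticMap.prod (hypSpace k m).form (hypPlane k).form) x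
    simp only [QuadraticMap.prod_apply, hypAddEquiv_form n m]
    show (hypSpace k n).form x.1 + (hypSpace k m).form x.2.1 + (hypPlane k).form x.2.2 = _
    rw [add_assoc]
    rfl

/-- The reassociation isometry `(Z ⊥ Hₙ) ⊥ Hₘ ≅ Z ⊥ Hₙ₊ₘ`. -/
def reassocIso (Z : QuadSpace k) (n m : ℕ) :
    orthSum k (orthSum k Z (hypSpace k n)) (hypSpace k m) ≅
      orthSum k Z (hypSpace k (n + m)) :=
  isoMk k ((LinearEquiv.prodAssoc k Z.carrier (hypSpace k n).carrier
      (hypSpace k m).carrier).trans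
      ((LinearEquiv.refl k Z.carrier).prodCongr (hypAddEquiv k n m)))
    (fun x => by
      show QuadraticMap.prod Z.form (hypSpace k (n + m)).form
          (x.1.1, hypAddEquiv k n m (x.1.2, x.2)) = _
      simp only [QuadraticMap.prod_apply, hypAddEquiv_form]
      show Z.form x.1.1 + ((hypSpace k n).form x.1.2 + (hypSpace k m).form x.2) = _
      rw [← add_assoc]
      rfl)

lemma incl_incl_reassoc (Z : QuadSpace k) (n m : ℕ) :
    orthIncl k Z (hypSpace k n) ≫
      orthIncl k (orthSum k Z (hypSpace k n)) (hypSpace k m) ≫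
        (reassocIso k Z n m).hom = orthIncl k Z (hypSpace k (n + m)) := by
  apply QuadHom.ext
  apply LinearMap.ext
  intro z
  show (z, hypAddEquiv k n m (0, 0)) = (z, 0)
  have : ((0 : (hypSpace k n).carrier), (0 : (hypSpace k m).carrier)) =
      (0 : (hypSpace k n).carrier × (hypSpace k m).carrier) := rfl
  rw [this, map_zero]

lemma incl_sumMap {Y Z : QuadSpace k} (g : Y ⟶ Z) (H : QuadSpace k) :
    orthIncl k Y H ≫ sumMap k g (𝟙 H) = g ≫ orthIncl k Z H := by
  apply QuadHom.ext
  apply LinearMap.ext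
  intro y
  rfl

instance instIsIsoQIncl (D : QuadSpace k) (m : ℕ) :
    IsIso ((Wq k).Q.map (orthIncl k D (hypSpace k m))) :=
  MorphismProperty.Q_inverts (Wq k) _ (IsHypIncl.mk D m)

/-- Every morphism `L(X) → L(Y)` of the localized category `𝓠(k)[W⁻¹]` can be written
as `(L ι_Y)⁻¹ ∘ L(f)` for some morphism `f : X → Y ⊥ H` of `𝓠(k)` with `H` hyperbolic. -/
theorem localization_morphism_factorization
    (k : Type) [Field k] (X Y : QuadSpace k)
    (φ : (Wq k).Q.obj X ⟶ (Wq k).Q.obj Y) :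
    ∃ (m : ℕ) (f : X ⟶ orthSum k Y (hypSpace k m)),
      letI : IsIso ((Wq k).Q.map (orthIncl k Y (hypSpace k m))) :=
        MorphismProperty.Q_inverts (Wq k) _ (IsHypIncl.mk Y m)
      φ = (Wq k).Q.map f ≫ inv ((Wq k).Q.map (orthIncl k Y (hypSpace k m))) := by
  let obj : (Wq k).Localization → QuadSpace k :=
    fun X' => (Localization.Construction.objEquiv (Wq k)).symm X'
  have hobj : ∀ X', (Wq k).Q.obj (obj X') = X' :=
    fun X' => (Localization.Construction.objEquiv (Wq k)).apply_symm_apply X'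
  let P : MorphismProperty (Wq k).Localization := fun X' Y' g =>
    ∃ (m : ℕ) (f : obj X' ⟶ orthSum k (obj Y') (hypSpace k m)),
      g = eqToHom (hobj X').symm ≫ (Wq k).Q.map f ≫
        inv ((Wq k).Q.map (orthIncl k (obj Y') (hypSpace k m))) ≫ eqToHom (hobj Y')
  haveI : P.IsStableUnderComposition := by
    constructor
    rintro X' Y' Z' g₁ g₂ ⟨m, f, hf⟩ ⟨n, g, hg⟩
    refine ⟨n + m, f ≫ sumMap k g (𝟙 (hypSpace k m)) ≫ (reassocIso k (obj Z') n m).hom, ?_⟩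
    have sq : (Wq k).Q.map (orthIncl k (obj Y') (hypSpace k m)) ≫
        (Wq k).Q.map (sumMap k g (𝟙 (hypSpace k m))) =
        (Wq k).Q.map g ≫ (Wq k).Q.map (orthIncl k (orthSum k (obj Z') (hypSpace k n)) (hypSpace k m)) := by
      rw [← (Wq k).Q.map_comp, ← (Wq k).Q.map_comp, incl_sumMap]
    have sq' : inv ((Wq k).Q.map (orthIncl k (obj Y') (hypSpace k m))) ≫ (Wq k).Q.map g =
        (Wq k).Q.map (sumMap k g (𝟙 (hypSpace k m))) ≫
          inv ((Wq k).Q.map (orthIncl k (orthSum k (obj Z') (hypSpace k n)) (hypSpace k m))) := by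
      rw [IsIso.inv_comp_eq, ← Category.assoc, sq, Category.assoc, IsIso.hom_inv_id,
        Category.comp_id]
    have e' : ((Wq k).Q.map (orthIncl k (obj Z') (hypSpace k n)) ≫
        (Wq k).Q.map (orthIncl k (orthSum k (obj Z') (hypSpace k n)) (hypSpace k m))) ≫
        (Wq k).Q.map (reassocIso k (obj Z') n m).hom =
        (Wq k).Q.map (orthIncl k (obj Z') (hypSpace k (n + m))) := by
      rw [Category.assoc, ← (Wq k).Q.map_comp, ← (Wq k).Q.map_comp, incl_incl_reassoc]
    have tri : inv ((Wq k).Q.map (orthIncl k (orthSum k (obj Z') (hypSpace k n)) (hypSpace k m))) ≫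
        inv ((Wq k).Q.map (orthIncl k (obj Z') (hypSpace k n))) =
        (Wq k).Q.map (reassocIso k (obj Z') n m).hom ≫
          inv ((Wq k).Q.map (orthIncl k (obj Z') (hypSpace k (n + m)))) := by
      have i1 : inv ((Wq k).Q.map (orthIncl k (obj Z') (hypSpace k n)) ≫
          (Wq k).Q.map (orthIncl k (orthSum k (obj Z') (hypSpace k n)) (hypSpace k m))) =
          inv ((Wq k).Q.map (orthIncl k (orthSum k (obj Z') (hypSpace k n)) (hypSpace k m))) ≫
          inv ((Wq k).Q.map (orthIncl k (obj Z') (hypSpace k n))) := by simp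
      have i2 : inv ((Wq k).Q.map (orthIncl k (obj Z') (hypSpace k n)) ≫
          (Wq k).Q.map (orthIncl k (orthSum k (obj Z') (hypSpace k n)) (hypSpace k m))) =
          (Wq k).Q.map (reassocIso k (obj Z') n m).hom ≫
            inv ((Wq k).Q.map (orthIncl k (obj Z') (hypSpace k (n + m)))) :=
        IsIso.inv_eq_of_hom_inv_id (by rw [← Category.assoc, e', IsIso.hom_inv_id])
      rw [← i1, i2]
    rw [hf, hg]
    simp only [Category.assoc, eqToHom_trans_assoc, eqToHom_refl, Category.id_comp,
      Functor.map_comp]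
    congr 1
    congr 1
    rw [← Category.assoc, ← Category.assoc, sq', Category.assoc, Category.assoc]
    congr 1
    rw [← Category.assoc (inv _), tri]
    simp only [Category.assoc]
  have hP : P = ⊤ := by
    apply Localization.Construction.morphismProperty_eq_top P
    · intro X₀ Y₀ f
      refine ⟨0, f ≫ orthIncl k Y₀ (hypSpace k 0), ?_⟩
      have h1 : (hobj ((Wq k).Q.obj X₀)).symm = rfl := rfl
      have h2 : hobj ((Wq k).Q.obj Y₀) = rfl := rfl
      have h3 : inv ((Wq k).Q.map (orthIncl k (obj ((Wq k).Q.obj Y₀)) (hypSpace k 0))) =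
          inv ((Wq k).Q.map (orthIncl k Y₀ (hypSpace k 0))) := rfl
      rw [h1, h2, h3]
      erw [eqToHom_refl, eqToHom_refl, Category.id_comp, Category.comp_id]
      show (Wq k).Q.map f = (Wq k).Q.map (f ≫ orthIncl k Y₀ (hypSpace k 0)) ≫
        inv ((Wq k).Q.map (orthIncl k Y₀ (hypSpace k 0)))
      simp
    · intro X₀ Y₀ w hw
      cases hw with
      | mk m =>
        refine ⟨m, 𝟙 (orthSum k X₀ (hypSpace k m)), ?_⟩
        have h1 : (hobj ((Wq k).Q.obj (orthSum k X₀ (hypSpace k m)))).symm = rfl := rfl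
        have h2 : hobj ((Wq k).Q.obj X₀) = rfl := rfl
        have h3 : inv ((Wq k).Q.map (orthIncl k (obj ((Wq k).Q.obj X₀)) (hypSpace k m))) =
            inv ((Wq k).Q.map (orthIncl k X₀ (hypSpace k m))) := rfl
        rw [h1, h2, h3]
        have h4 : Localization.Construction.wInv (W := Wq k) (orthIncl k X₀ (hypSpace k m))
            (IsHypIncl.mk X₀ m) = inv ((Wq k).Q.map (orthIncl k X₀ (hypSpace k m))) :=
          (IsIso.inv_eq_of_hom_inv_id
            (Localization.Construction.wIso (W := Wq k) (orthIncl k X₀ (hypSpace k m))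
              (IsHypIncl.mk X₀ m)).hom_inv_id).symm
        rw [h4]
        erw [eqToHom_refl, eqToHom_refl, Category.comp_id, Category.id_comp]
        have h5 : (Wq k).Q.map (𝟙 (orthSum k X₀ (hypSpace k m)) :
            obj ((Wq k).Q.obj (orthSum k X₀ (hypSpace k m))) ⟶
              orthSum k (obj ((Wq k).Q.obj X₀)) (hypSpace k m)) =
            𝟙 ((Wq k).Q.obj (orthSum k X₀ (hypSpace k m))) :=
          (Wq k).Q.map_id (orthSum k X₀ (hypSpace k m))
        erw [h5]
        exact (Category.id_comp _).symm
  have hφ : P φ := by rw [hP]; trivial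
  obtain ⟨m, f, hf⟩ := hφ
  refine ⟨m, f, ?_⟩
  have h1 : (hobj ((Wq k).Q.obj X)).symm = rfl := rfl
  have h2 : hobj ((Wq k).Q.obj Y) = rfl := rfl
  have h3 : inv ((Wq k).Q.map (orthIncl k (obj ((Wq k).Q.obj Y)) (hypSpace k m))) =
      inv ((Wq k).Q.map (orthIncl k Y (hypSpace k m))) := rfl
  rw [h1, h2, h3] at hf
  rw [hf]; erw [eqToHom_refl, eqToHom_refl, Category.id_comp, Category.comp_id]
  rfl

end StableHomology
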